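/- If m ≥ 3 is odd and n is even with 3 ≤ n ≤ m−2, then the coloring of K_{n+m−1} in which edge {v_i, v_j} is blue iff the circular distance between i and j modulo n+m−1 is at most (m−1)/2 contains no red K_{1,n} and no blue K_{1,m}+e. -/

import Mathlib

open SimpleGraph

/-- `Contains G H` : the graph `G` contains a copy of `H`. -/
def Contains {V W : Type*} (G : SimpleGraph V) (H : SimpleGraph W) : Prop :=
  ∃ f : W → V, Function.Injective f ∧ ∀ a b, H.Adj a b → G.Adj (f a) (f b)

/-- The star `K_{1,n}` on `n+1` vertices: vertex `0` is joined to all others. -/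
def starG (n : ℕ) : SimpleGraph (Fin (n + 1)) :=
  SimpleGraph.fromRel (fun a _ => a = 0)

/-- `K_{1,m}+e` on `m+1` vertices: vertex `0` joined to all others, plus the edge `{1,2}`. -/
def starPlusE (m : ℕ) : SimpleGraph (Fin (m + 1)) :=
  SimpleGraph.fromRel (fun a b => a = 0 ∨ (a = 1 ∧ b = 2))

private lemma modf (N a b : ℕ) (ha : a < N) (hb : b < N) :
    (a + N - b) % N = if b ≤ a then a - b else a + N - b := by
  split_ifs with h
  · have h1 : a + N - b = (a - b) + N := by omega
    rw [h1, Nat.add_mod_right, Nat.mod_eq_of_lt (by omega)]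
  · exact Nat.mod_eq_of_lt (by omega)

private lemma blue_card (N k : ℕ) (v : Fin N) :
    ((Finset.univ : Finset (Fin N)).filter
      (fun u => u ≠ v ∧
        min ((v.val + N - u.val) % N) ((u.val + N - v.val) % N) ≤ k)).card ≤ 2 * k := by
  have hN : 0 < N := v.pos
  have h : ((Finset.univ : Finset (Fin N)).filter
      (fun u => u ≠ v ∧
        min ((v.val + N - u.val) % N) ((u.val + N - v.val) % N) ≤ k)).card
      ≤ (Finset.Icc 1 k ∪ Finset.Icc (N - k) (N - 1)).card := by
    refine Finset.card_le_card_of_injOn (fun u : Fin N => (u.val + N - v.val) % N) ?_ ?_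
    · intro u hu
      simp only [Finset.mem_coe, Finset.mem_filter, Finset.mem_univ, true_and] at hu
      obtain ⟨hne, hmin⟩ := hu
      have hv : u.val ≠ v.val := fun h => hne (Fin.ext h)
      rw [modf N _ _ v.isLt u.isLt, modf N _ _ u.isLt v.isLt, min_le_iff] at hmin
      show (u.val + N - v.val) % N ∈ _
      rw [modf N _ _ u.isLt v.isLt]
      simp only [Finset.mem_coe, Finset.mem_union, Finset.mem_Icc]
      have := u.isLt; have := v.isLt
      split_ifs at hmin ⊢ <;> omega
    · intro u1 h1 u2 h2 he
      simp only [Finset.coe_filter, Set.mem_setOf_eq, Finset.mem_univ, true_and] at h1 h2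
      have hv1 : u1.val ≠ v.val := fun h => h1.1 (Fin.ext h)
      have hv2 : u2.val ≠ v.val := fun h => h2.1 (Fin.ext h)
      have he' : (u1.val + N - v.val) % N = (u2.val + N - v.val) % N := he
      rw [modf N _ _ u1.isLt v.isLt, modf N _ _ u2.isLt v.isLt] at he'
      have := u1.isLt; have := u2.isLt; have := v.isLt
      apply Fin.ext
      split_ifs at he' <;> omega
  refine h.trans ?_
  refine (Finset.card_union_le _ _).trans ?_
  rw [Nat.card_Icc, Nat.card_Icc]; omega

private lemma red_card (N k : ℕ) (v : Fin N) :
    ((Finset.univ : Finset (Fin N)).filter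
      (fun u => u ≠ v ∧
        ¬ min ((v.val + N - u.val) % N) ((u.val + N - v.val) % N) ≤ k)).card
      ≤ N - 2 * k - 1 := by
  have h : ((Finset.univ : Finset (Fin N)).filter
      (fun u => u ≠ v ∧
        ¬ min ((v.val + N - u.val) % N) ((u.val + N - v.val) % N) ≤ k)).card
      ≤ (Finset.Icc (k + 1) (N - k - 1)).card := by
    refine Finset.card_le_card_of_injOn (fun u : Fin N => (u.val + N - v.val) % N) ?_ ?_
    · intro u hu
      simp only [Finset.mem_coe, Finset.mem_filter, Finset.mem_univ, true_and, not_le, lt_min_iff] at hu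
      obtain ⟨hne, hmin⟩ := hu
      have hv : u.val ≠ v.val := fun h => hne (Fin.ext h)
      rw [modf N _ _ v.isLt u.isLt, modf N _ _ u.isLt v.isLt] at hmin
      show (u.val + N - v.val) % N ∈ _
      rw [modf N _ _ u.isLt v.isLt]
      simp only [Finset.mem_coe, Finset.mem_Icc]
      have := u.isLt; have := v.isLt
      obtain ⟨ha, hb⟩ := hmin
      split_ifs at ha hb ⊢ <;> omega
    · intro u1 h1 u2 h2 he
      simp only [Finset.coe_filter, Set.mem_setOf_eq, Finset.mem_univ, true_and] at h1 h2
      have hv1 : u1.val ≠ v.val := fun h => h1.1 (Fin.ext h)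
      have hv2 : u2.val ≠ v.val := fun h => h2.1 (Fin.ext h)
      have he' : (u1.val + N - v.val) % N = (u2.val + N - v.val) % N := he
      rw [modf N _ _ u1.isLt v.isLt, modf N _ _ u2.isLt v.isLt] at he'
      have := u1.isLt; have := u2.isLt; have := v.isLt
      apply Fin.ext
      split_ifs at he' <;> omega
  refine h.trans ?_
  rw [Nat.card_Icc]; omega

theorem stmt_6 (n m : ℕ) (hmodd : Odd m) (hm : 3 ≤ m) (hne : Even n) (hn : 3 ≤ n)
    (hnm : n + 2 ≤ m) :
    ¬ Contains (SimpleGraph.fromRel (fun a b : Fin (n + m - 1) =>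
        min ((a.val + (n + m - 1) - b.val) % (n + m - 1))
            ((b.val + (n + m - 1) - a.val) % (n + m - 1)) ≤ (m - 1) / 2))ᶜ (starG n) ∧
    ¬ Contains (SimpleGraph.fromRel (fun a b : Fin (n + m - 1) =>
        min ((a.val + (n + m - 1) - b.val) % (n + m - 1))
            ((b.val + (n + m - 1) - a.val) % (n + m - 1)) ≤ (m - 1) / 2))
      (starPlusE m) := by
  obtain ⟨K, hK⟩ := hmodd
  constructor
  · rintro ⟨f, hinj, hadj⟩
    have hstar : ∀ i : Fin (n + 1), i ≠ 0 → (starG n).Adj 0 i := by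
      intro i hi
      simp only [starG, SimpleGraph.fromRel_adj]
      exact ⟨Ne.symm hi, Or.inl trivial⟩
    have hsub : (Finset.univ.erase (0 : Fin (n + 1))).image f ⊆
        (Finset.univ : Finset (Fin (n + m - 1))).filter
          (fun u => u ≠ f 0 ∧
            ¬ min (((f 0).val + (n + m - 1) - u.val) % (n + m - 1))
                ((u.val + (n + m - 1) - (f 0).val) % (n + m - 1)) ≤ (m - 1) / 2) := by
      intro u hu
      simp only [Finset.mem_image, Finset.mem_erase, Finset.mem_univ, and_true] at hu
      obtain ⟨i, hi, rfl⟩ := hu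
      have h := hadj 0 i (hstar i hi)
      rw [SimpleGraph.compl_adj, SimpleGraph.fromRel_adj] at h
      obtain ⟨hne, hP⟩ := h
      push_neg at hP
      simp only [Finset.mem_filter, Finset.mem_univ, true_and]
      obtain ⟨p, q⟩ := hP hne
      rw [lt_min_iff] at p q
      refine ⟨Ne.symm hne, not_le.mpr (lt_min_iff.mpr ⟨?_, ?_⟩)⟩ <;>
        first | exact p.1 | exact p.2 | exact q.1 | exact q.2
    have hcard := (Finset.card_le_card hsub).trans
      (red_card (n + m - 1) ((m - 1) / 2) (f 0))
    rw [Finset.card_image_of_injective _ hinj, Finset.card_erase_of_mem (Finset.mem_univ _),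
      Finset.card_univ, Fintype.card_fin] at hcard
    omega
  · rintro ⟨f, hinj, hadj⟩
    have hstar : ∀ i : Fin (m + 1), i ≠ 0 → (starPlusE m).Adj 0 i := by
      intro i hi
      simp only [starPlusE, SimpleGraph.fromRel_adj]
      exact ⟨Ne.symm hi, Or.inl (Or.inl trivial)⟩
    have hsub : (Finset.univ.erase (0 : Fin (m + 1))).image f ⊆
        (Finset.univ : Finset (Fin (n + m - 1))).filter
          (fun u => u ≠ f 0 ∧
            min (((f 0).val + (n + m - 1) - u.val) % (n + m - 1))
                ((u.val + (n + m - 1) - (f 0).val) % (n + m - 1)) ≤ (m - 1) / 2) := by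
      intro u hu
      simp only [Finset.mem_image, Finset.mem_erase, Finset.mem_univ, and_true] at hu
      obtain ⟨i, hi, rfl⟩ := hu
      have h := hadj 0 i (hstar i hi)
      rw [SimpleGraph.fromRel_adj] at h
      obtain ⟨hne, hP⟩ := h
      simp only [Finset.mem_filter, Finset.mem_univ, true_and]
      refine ⟨Ne.symm hne, ?_⟩
      rcases hP with h | h <;>
        rcases min_le_iff.mp h with h' | h' <;>
        first
          | exact min_le_iff.mpr (Or.inl h')
          | exact min_le_iff.mpr (Or.inr h')
    have hcard := (Finset.card_le_card hsub).trans
      (blue_card (n + m - 1) ((m - 1) / 2) (f 0))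
    rw [Finset.card_image_of_injective _ hinj, Finset.card_erase_of_mem (Finset.mem_univ _),
      Finset.card_univ, Fintype.card_fin] at hcard
    omega
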